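/- KKT characterization for norm-ball constraints: a point x is a KKT point of min_{‖x‖ ≤ 1/λ} L(x) (i.e., there exists s* ≥ 0 with ‖x‖ ≤ 1/λ, 0 ∈ ∇L(x) + s*∂‖·‖(x), and s*(‖x‖ − 1/λ) = 0) if and only if ‖x‖ ≤ 1/λ and ⟨−λx, ∇L(x)⟩ = ‖∇L(x)‖_*. -/

import Mathlib

open scoped RealInnerProductSpace BigOperators
open Filter Finset

/-- `N` is a norm on `ℝ^d`. -/
def IsNorm {d : ℕ} (N : EuclideanSpace ℝ (Fin d) → ℝ) : Prop :=
  (∀ x, N x = 0 ↔ x = 0) ∧ (∀ (c : ℝ) (x), N (c • x) = |c| * N x) ∧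
    (∀ x y, N (x + y) ≤ N x + N y)

/-- `D` is the dual norm of `N`: `D g` is the maximum of `⟪g, x⟫` over the unit ball of `N`
(the supremum is attained in finite dimension). -/
def IsDualNorm {d : ℕ} (N D : EuclideanSpace ℝ (Fin d) → ℝ) : Prop :=
  ∀ g, IsGreatest {r : ℝ | ∃ x, N x ≤ 1 ∧ r = ⟪g, x⟫} (D g)

/-- `g` is a subgradient of the convex function `f` at `x`. -/
def SubgradientAt {d : ℕ} (f : EuclideanSpace ℝ (Fin d) → ℝ)
    (x g : EuclideanSpace ℝ (Fin d)) : Prop :=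
  ∀ y, f x + ⟪y - x, g⟫ ≤ f y

section helpers

variable {d : ℕ} {N : EuclideanSpace ℝ (Fin d) → ℝ}

lemma IsNorm.zero (hN : IsNorm N) : N 0 = 0 := (hN.1 0).2 rfl

lemma IsNorm.neg' (hN : IsNorm N) (y : EuclideanSpace ℝ (Fin d)) : N (-y) = N y := by
  have := hN.2.1 (-1) y
  simpa using this

lemma IsNorm.nonneg (hN : IsNorm N) (y : EuclideanSpace ℝ (Fin d)) : 0 ≤ N y := by
  have h := hN.2.2 y (-y)
  rw [add_neg_cancel, hN.zero, hN.neg'] at h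
  linarith

lemma IsNorm.sum_le (hN : IsNorm N) {ι : Type*} (s : Finset ι)
    (f : ι → EuclideanSpace ℝ (Fin d)) : N (∑ i ∈ s, f i) ≤ ∑ i ∈ s, N (f i) := by
  classical
  induction s using Finset.induction with
  | empty => simp [hN.zero]
  | @insert a s h ih =>
      rw [Finset.sum_insert h, Finset.sum_insert h]
      exact le_trans (hN.2.2 _ _) (by linarith)

lemma IsNorm.continuous (hN : IsNorm N) : Continuous N := by
  set C : ℝ := ∑ i, N (EuclideanSpace.single i (1:ℝ)) with hC
  have hCn : 0 ≤ C := Finset.sum_nonneg fun i _ => hN.nonneg _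
  have key : ∀ v : EuclideanSpace ℝ (Fin d), N v ≤ C * ‖v‖ := by
    intro v
    have hv : ∑ i, v i • EuclideanSpace.single i (1:ℝ) = v := by
      have := (EuclideanSpace.basisFun (Fin d) ℝ).sum_repr v
      simpa [EuclideanSpace.basisFun_apply, EuclideanSpace.basisFun_repr] using this
    calc N v = N (∑ i, v i • EuclideanSpace.single i (1:ℝ)) := by rw [hv]
      _ ≤ ∑ i, N (v i • EuclideanSpace.single i (1:ℝ)) := hN.sum_le _ _
      _ = ∑ i, |v i| * N (EuclideanSpace.single i (1:ℝ)) := by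
            simp [hN.2.1]
      _ ≤ ∑ i, ‖v‖ * N (EuclideanSpace.single i (1:ℝ)) := by
            apply Finset.sum_le_sum
            intro i _
            have h1 : |v i| ≤ ‖v‖ := by
              have h2 : |v i| = Real.sqrt (‖v i‖^2) := by
                rw [Real.sqrt_sq_eq_abs]; simp [Real.norm_eq_abs]
              rw [h2, EuclideanSpace.norm_eq v]
              apply Real.sqrt_le_sqrt
              exact Finset.single_le_sum (f := fun j => ‖v j‖^2)
                (fun j _ => sq_nonneg _) (Finset.mem_univ i)
            exact mul_le_mul_of_nonneg_right h1 (hN.nonneg _)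
      _ = C * ‖v‖ := by rw [← Finset.mul_sum, mul_comm]
  have lip : LipschitzWith (Real.toNNReal C) N := by
    apply LipschitzWith.of_dist_le_mul
    intro a b
    have h1 : N a - N b ≤ N (a - b) := by
      have := hN.2.2 (a - b) b; simp at this; linarith
    have h2 : N b - N a ≤ N (a - b) := by
      have := hN.2.2 (b - a) a
      simp at this
      have e : N (b - a) = N (a - b) := by rw [← hN.neg' (a-b)]; congr 1; abel
      linarith [e ▸ this]
    have h3 : dist (N a) (N b) ≤ N (a - b) := by
      rw [Real.dist_eq]; exact abs_le.mpr ⟨by linarith, h1⟩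
    calc dist (N a) (N b) ≤ N (a - b) := h3
      _ ≤ C * ‖a - b‖ := key _
      _ = (Real.toNNReal C) * dist a b := by
            rw [dist_eq_norm, Real.coe_toNNReal _ hCn]
  exact lip.continuous

lemma IsNorm.exists_subgradient (hN : IsNorm N) (x : EuclideanSpace ℝ (Fin d)) :
    ∃ u, SubgradientAt N x u := by
  rcases eq_or_ne x 0 with rfl | hx
  · refine ⟨0, fun y => ?_⟩
    simpa [hN.zero] using hN.nonneg y
  · have hNx : 0 < N x := lt_of_le_of_ne (hN.nonneg x) (fun h => hx ((hN.1 x).1 h.symm))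
    set A : Set (EuclideanSpace ℝ (Fin d)) := {y | N y < N x} with hA
    have hconv : Convex ℝ A := by
      intro a ha b hb ta tb hta htb hab
      simp only [hA, Set.mem_setOf_eq] at ha hb ⊢
      have hsum := hN.2.2 (ta • a) (tb • b)
      rw [hN.2.1, hN.2.1, abs_of_nonneg hta, abs_of_nonneg htb] at hsum
      have h1 : ta * N a ≤ ta * N x := mul_le_mul_of_nonneg_left ha.le hta
      have h2 : tb * N b ≤ tb * N x := mul_le_mul_of_nonneg_left hb.le htb
      rcases eq_or_lt_of_le hta with h | h
      · have htb1 : tb = 1 := by linarith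
        have h3 : tb * N b < tb * N x := by rw [htb1]; simpa using hb
        nlinarith
      · have h3 : ta * N a < ta * N x := mul_lt_mul_of_pos_left ha h
        nlinarith
    have hopen : IsOpen A := isOpen_lt hN.continuous continuous_const
    have hxA : x ∉ A := by simp [hA]
    obtain ⟨f, hf⟩ := geometric_hahn_banach_open_point hconv hopen hxA
    have hf0 : (0:ℝ) < f x := by
      have := hf 0 (by simp [hA, hN.zero, hNx])
      simpa using this
    -- key: ∀ z, N z = N x → f z ≤ f x
    have hkey : ∀ z, N z = N x → f z ≤ f x := by
      intro z hz
      by_contra h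
      push_neg at h
      have hfz : 0 < f z := lt_trans hf0 h
      set t : ℝ := (f x + f z) / (2 * f z) with ht
      have ht0 : 0 < t := by positivity
      have ht1 : t < 1 := by rw [ht, div_lt_one (by positivity)]; linarith
      have hmem : t • z ∈ A := by
        simp only [hA, Set.mem_setOf_eq, hN.2.1, abs_of_pos ht0, hz]
        nlinarith
      have := hf _ hmem
      rw [map_smul, smul_eq_mul] at this
      have : t * f z < f x := this
      rw [ht] at this
      have h2 : (f x + f z) / (2 * f z) * f z = (f x + f z) / 2 := by
        field_simp
      rw [h2] at this
      linarith
    -- ∀ y, N x * f y ≤ f x * N y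
    have hbound : ∀ y, N x * f y ≤ f x * N y := by
      intro y
      rcases eq_or_lt_of_le (hN.nonneg y) with h0 | h0
      · have : y = 0 := (hN.1 y).1 h0.symm
        simp [this, hN.zero]
      · have hz : N ((N x / N y) • y) = N x := by
          rw [hN.2.1, abs_of_pos (by positivity)]
          field_simp
        have := hkey _ hz
        rw [map_smul, smul_eq_mul] at this
        rw [div_mul_eq_mul_div, div_le_iff₀ h0] at this
        linarith [this]
    set w := (InnerProductSpace.toDual ℝ (EuclideanSpace ℝ (Fin d))).symm f with hw
    have hwf : ∀ y, ⟪w, y⟫ = f y := fun y => InnerProductSpace.toDual_symm_apply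
    refine ⟨(N x / f x) • w, fun y => ?_⟩
    have hyu : ∀ v, ⟪v, (N x / f x) • w⟫ ≤ N v := by
      intro v
      rw [real_inner_smul_right, real_inner_comm, hwf]
      rw [div_mul_eq_mul_div, div_le_iff₀ hf0]
      have := hbound v
      nlinarith [this]
    have hxu : ⟪x, (N x / f x) • w⟫ = N x := by
      rw [real_inner_smul_right, real_inner_comm, hwf]
      field_simp
    have : ⟪y - x, (N x / f x) • w⟫ = ⟪y, (N x / f x) • w⟫ - ⟪x, (N x / f x) • w⟫ :=
      inner_sub_left _ _ _
    rw [this, hxu]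
    have := hyu y
    linarith

end helpers

/-- KKT characterization for norm-ball constraints. `x` is a KKT point of
`min_{N x ≤ 1/λ} L(x)` iff `N x ≤ 1/λ` and `⟪-λ x, ∇L(x)⟫ = ‖∇L(x)‖_*`. -/
theorem kkt_iff {d : ℕ} (N D : EuclideanSpace ℝ (Fin d) → ℝ)
    (hN : IsNorm N) (hD : IsDualNorm N D) (lam : ℝ) (hlam : 0 < lam)
    (L : EuclideanSpace ℝ (Fin d) → ℝ) (G : EuclideanSpace ℝ (Fin d) → EuclideanSpace ℝ (Fin d))
    (hG : ∀ y, HasGradientAt L (G y) y) (hGcont : Continuous G)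
    (x : EuclideanSpace ℝ (Fin d)) :
    (∃ s : ℝ, 0 ≤ s ∧ N x ≤ 1 / lam ∧
        (∃ u, SubgradientAt N x u ∧ G x + s • u = 0) ∧ s * (N x - 1 / lam) = 0) ↔
      (N x ≤ 1 / lam ∧ ⟪-(lam • x), G x⟫ = D (G x)) := by
  constructor
  · rintro ⟨s, hs0, hle, ⟨u, hu, heq⟩, hcomp⟩
    refine ⟨hle, ?_⟩
    have hGx : G x = -(s • u) := eq_neg_of_add_eq_zero_left heq
    have hGz : ∀ z, ⟪G x, z⟫ = -(s * ⟪u, z⟫) := by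
      intro z; rw [hGx, inner_neg_left, real_inner_smul_left]
    -- subgradient facts
    have hxu : ⟪x, u⟫ = N x := by
      have h1 := hu 0
      have h2 := hu ((2:ℝ) • x)
      rw [hN.zero, zero_sub, inner_neg_left] at h1
      have e2 : (2:ℝ) • x - x = x := by rw [two_smul]; abel
      rw [e2, hN.2.1] at h2
      have habs : |(2:ℝ)| = 2 := by norm_num
      rw [habs] at h2
      linarith
    have hyu : ∀ y, ⟪y, u⟫ ≤ N y := by
      intro y
      have := hu y
      rw [inner_sub_left, hxu] at this
      linarith
    have hsNx : lam * s * N x = s := by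
      have : s * N x = s * (1/lam) := by linarith [hcomp, mul_sub s (N x) (1/lam)]
      calc lam * s * N x = lam * (s * N x) := by ring
        _ = lam * (s * (1/lam)) := by rw [this]
        _ = s := by field_simp
    have hLHS : ⟪-(lam • x), G x⟫ = s := by
      rw [real_inner_comm, hGz, inner_neg_right, real_inner_smul_right,
        real_inner_comm x u, hxu]
      linear_combination hsNx
    rw [hLHS]
    have hgreat : IsGreatest {r : ℝ | ∃ z, N z ≤ 1 ∧ r = ⟪G x, z⟫} s := by
      constructor
      · refine ⟨-(lam • x), ?_, ?_⟩
        · rw [hN.neg', hN.2.1, abs_of_pos hlam]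
          calc lam * N x ≤ lam * (1/lam) := by nlinarith
            _ = 1 := by field_simp
        · rw [hGz, inner_neg_right, real_inner_smul_right, real_inner_comm x u, hxu]
          linear_combination -hsNx
      · rintro r ⟨z, hz, rfl⟩
        rw [hGz, real_inner_comm z u]
        have h := hyu (-z)
        rw [inner_neg_left, hN.neg'] at h
        nlinarith [hN.nonneg z]
    exact ((hD (G x)).unique hgreat).symm
  · rintro ⟨hle, hinner⟩
    set M := D (G x) with hM
    have hgr := hD (G x)
    have hM0 : 0 ≤ M := by
      have : (0:ℝ) ∈ {r : ℝ | ∃ z, N z ≤ 1 ∧ r = ⟪G x, z⟫} :=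
        ⟨0, by simp [hN.zero], by simp⟩
      exact hgr.2 this
    have hub : ∀ y, ⟪G x, y⟫ ≤ M * N y := by
      intro y
      rcases eq_or_lt_of_le (hN.nonneg y) with h0 | h0
      · have hy : y = 0 := (hN.1 y).1 h0.symm
        simp [hy, hN.zero]
      · have hz : N ((1 / N y) • y) ≤ 1 := by
          rw [hN.2.1, abs_of_pos (by positivity)]
          rw [div_mul_eq_mul_div, one_mul, div_le_one h0]
        have := hgr.2 ⟨(1 / N y) • y, hz, rfl⟩
        rw [real_inner_smul_right] at this
        rw [div_mul_eq_mul_div, one_mul, div_le_iff₀ h0] at this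
        linarith [this]
    rcases eq_or_lt_of_le hM0 with hMeq | hMpos
    · -- M = 0 ⇒ G x = 0
      have hGx0 : G x = 0 := by
        have := hub (G x)
        rw [← hMeq, zero_mul] at this
        have := real_inner_self_nonpos.mp this
        exact this
      obtain ⟨u, hu⟩ := hN.exists_subgradient x
      exact ⟨0, le_refl 0, hle, ⟨u, hu, by simp [hGx0]⟩, by ring⟩
    · -- M > 0
      have hxG : ⟪x, G x⟫ = -M / lam := by
        have h : -lam * ⟪x, G x⟫ = M := by
          rw [← hinner, inner_neg_left, real_inner_smul_left]; ring
        rw [eq_div_iff (ne_of_gt hlam)]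
        linarith
      set u : EuclideanSpace ℝ (Fin d) := -(M⁻¹ • G x) with hu_def
      have hxu : ⟪x, u⟫ = 1 / lam := by
        rw [hu_def, inner_neg_right, real_inner_smul_right, hxG]
        field_simp
      have hyu : ∀ y, ⟪y, u⟫ ≤ N y := by
        intro y
        rw [hu_def, inner_neg_right, real_inner_smul_right]
        have := hub (-y)
        rw [inner_neg_right, hN.neg'] at this
        rw [real_inner_comm]
        calc -(M⁻¹ * ⟪G x, y⟫) = M⁻¹ * -⟪G x, y⟫ := by ring
          _ ≤ M⁻¹ * (M * N y) := mul_le_mul_of_nonneg_left this (by positivity)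
          _ = N y := by field_simp
      have hNxe : N x = 1 / lam := by
        have h1 : ⟪x, u⟫ ≤ N x := hyu x
        rw [hxu] at h1
        linarith
      refine ⟨M, le_of_lt hMpos, hle, ⟨u, ?_, ?_⟩, by rw [hNxe]; ring⟩
      · intro y
        rw [inner_sub_left, hxu, hNxe]
        have := hyu y
        linarith
      · rw [hu_def, smul_neg, smul_smul]
        rw [mul_inv_cancel₀ (ne_of_gt hMpos), one_smul]
        abel
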